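/- A discrete large-sample estimation problem has distinctive likelihoods if and only if every approximate maximum likelihood estimator on it is strongly consistent. (In particular, if the distinctive likelihood condition fails at some θ*, one can construct an approximate ML estimator that, with positive P_{θ*}-probability, lies outside a fixed neighbourhood of θ* infinitely often.) -/

import Mathlib

open MeasureTheory ProbabilityTheory Filter Set Topology
open scoped ENNReal

/-- The cylinder event determined by the first `n` observations of `ω`. -/
def cylinder {Θ : Type*} {X : ℕ → Type*} (n : ℕ) (ω : Θ × (∀ i, X i)) :
    Set (Θ × (∀ i, X i)) :=
  {ω' | ∀ i < n, ω'.2 i = ω.2 i}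

attribute [local instance] Classical.propDecidable

namespace DLAux

noncomputable def cseq (k : ℕ) : ℝ≥0∞ := 1 - ((k : ℝ≥0∞) + 1)⁻¹

lemma cseq_lt_one (k : ℕ) : cseq k < 1 :=
  ENNReal.sub_lt_self ENNReal.one_ne_top one_ne_zero
    (ENNReal.inv_ne_zero.mpr (by simp))

lemma tendsto_cseq : Tendsto cseq atTop (𝓝 1) := by
  have h0 : Tendsto (fun k : ℕ => ((k : ℝ≥0∞) + 1)⁻¹) atTop (𝓝 0) := by
    have := (ENNReal.tendsto_inv_nat_nhds_zero).comp (tendsto_add_atTop_nat 1)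
    convert this using 2 with k
    simp [Function.comp, add_comm]
  have := ENNReal.Tendsto.sub (tendsto_const_nhds (x := (1 : ℝ≥0∞))) h0
    (Or.inl ENNReal.one_ne_top)
  simp at this
  exact this

variable {Θ Ω : Type*} [Nonempty Θ]

noncomputable def Ssup (ℓ : Θ → Set Ω → ℝ≥0∞) (s : Set Ω) : ℝ≥0∞ := ⨆ θ, ℓ θ s

def Trig (ℓ : Θ → Set Ω → ℝ≥0∞) (U : Set Θ) (k : ℕ) (s : Set Ω) : Prop :=
  ∃ θ, θ ∈ Uᶜ ∧ cseq k * Ssup ℓ s < ℓ θ s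

lemma Ssup_eq_sup (ℓ : Θ → Set Ω → ℝ≥0∞) (U : Set Θ) (s : Set Ω) :
    Ssup ℓ s = (⨆ θ ∈ U, ℓ θ s) ⊔ (⨆ θ ∈ Uᶜ, ℓ θ s) := by
  refine le_antisymm (iSup_le fun θ => ?_) (sup_le (iSup₂_le fun θ _ => le_iSup (fun θ => ℓ θ s) θ)
    (iSup₂_le fun θ _ => le_iSup (fun θ => ℓ θ s) θ))
  by_cases hθ : θ ∈ U
  · exact le_sup_of_le_left (le_biSup (fun θ => ℓ θ s) hθ)
  · exact le_sup_of_le_right (le_biSup (fun θ => ℓ θ s) hθ)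

lemma exists_pick2 (ℓ : Θ → Set Ω → ℝ≥0∞) (s : Set Ω) (hle : ∀ θ, ℓ θ s ≤ 1) (n : ℕ) :
    ∃ θ, cseq n * Ssup ℓ s ≤ ℓ θ s := by
  rcases eq_or_ne (Ssup ℓ s) 0 with h | h
  · exact ⟨Classical.arbitrary Θ, by simp [h]⟩
  · have hlt : cseq n * Ssup ℓ s < Ssup ℓ s := by
      have hne : Ssup ℓ s ≠ ∞ := ((iSup_le hle).trans_lt ENNReal.one_lt_top).ne
      calc cseq n * Ssup ℓ s < 1 * Ssup ℓ s :=
            (ENNReal.mul_lt_mul_iff_left h hne).mpr (cseq_lt_one n)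
        _ = Ssup ℓ s := one_mul _
    obtain ⟨θ, hθ⟩ := lt_iSup_iff.mp hlt
    exact ⟨θ, hθ.le⟩

noncomputable def pick (ℓ : Θ → Set Ω → ℝ≥0∞) (U : Set Θ) (n k : ℕ) (s : Set Ω) : Θ :=
  if h : Trig ℓ U k s then h.choose
  else if h2 : ∃ θ, cseq n * Ssup ℓ s ≤ ℓ θ s then h2.choose else Classical.arbitrary Θ

lemma pick_trig {ℓ : Θ → Set Ω → ℝ≥0∞} {U : Set Θ} {k : ℕ} {s : Set Ω}
    (h : Trig ℓ U k s) (n : ℕ) :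
    pick ℓ U n k s ∈ Uᶜ ∧ cseq k * Ssup ℓ s < ℓ (pick ℓ U n k s) s := by
  rw [pick, dif_pos h]
  exact h.choose_spec

lemma pick_bound {ℓ : Θ → Set Ω → ℝ≥0∞} {U : Set Θ} {s : Set Ω}
    (hle : ∀ θ, ℓ θ s ≤ 1) (n k : ℕ) :
    cseq (if Trig ℓ U k s then k else n) * Ssup ℓ s ≤ ℓ (pick ℓ U n k s) s := by
  by_cases h : Trig ℓ U k s
  · rw [if_pos h]
    exact (pick_trig h n).2.le
  · rw [if_neg h, pick, dif_neg h, dif_pos (exists_pick2 ℓ s hle n)]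
    exact (exists_pick2 ℓ s hle n).choose_spec

noncomputable def tcount (ℓ : Θ → Set Ω → ℝ≥0∞) (U : Set Θ) (s : ℕ → Set Ω) : ℕ → ℕ
  | 0 => 0
  | n + 1 => tcount ℓ U s n + if Trig ℓ U (tcount ℓ U s n) (s n) then 1 else 0

lemma tcount_le (ℓ : Θ → Set Ω → ℝ≥0∞) (U : Set Θ) (s : ℕ → Set Ω) :
    ∀ n, tcount ℓ U s n ≤ n := by
  intro n
  induction n with
  | zero => simp [tcount]
  | succ n ih =>
    rw [tcount]
    have : (if Trig ℓ U (tcount ℓ U s n) (s n) then 1 else 0) ≤ 1 := by split <;> simp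
    omega

lemma tcount_mono (ℓ : Θ → Set Ω → ℝ≥0∞) (U : Set Θ) (s : ℕ → Set Ω) :
    Monotone (tcount ℓ U s) := by
  apply monotone_nat_of_le_succ
  intro n
  rw [tcount]
  omega

lemma tcount_tendsto {ℓ : Θ → Set Ω → ℝ≥0∞} {U : Set Θ} {s : ℕ → Set Ω}
    (h : ∀ N, ∃ n ≥ N, Trig ℓ U (tcount ℓ U s n) (s n)) :
    Tendsto (tcount ℓ U s) atTop atTop := by
  refine tendsto_atTop_atTop_of_monotone (tcount_mono ℓ U s) (fun b => ?_)
  induction b with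
  | zero => exact ⟨0, Nat.zero_le _⟩
  | succ b ih =>
    obtain ⟨n, hn⟩ := ih
    obtain ⟨n', hn', htrig⟩ := h n
    refine ⟨n' + 1, ?_⟩
    rw [tcount, if_pos htrig]
    have := tcount_mono ℓ U s hn'
    omega

lemma tcount_congr {ℓ : Θ → Set Ω → ℝ≥0∞} {U : Set Θ} {s t : ℕ → Set Ω} :
    ∀ {n}, (∀ j < n, s j = t j) → tcount ℓ U s n = tcount ℓ U t n := by
  intro n
  induction n with
  | zero => intro _; rfl
  | succ n ih =>
    intro h
    rw [tcount, tcount, ih (fun j hj => h j (hj.trans (Nat.lt_succ_self n))),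
      h n (Nat.lt_succ_self n)]

lemma enn_div_le_one {a b : ℝ≥0∞} (h : a ≤ b) : a / b ≤ 1 :=
  ENNReal.div_le_of_le_mul (by simpa using h)

lemma enn_key {a b c : ℝ≥0∞} (hc : c < 1) (hb : b ≠ ∞) (h : b ≤ c * (a ⊔ b)) : b / a ≤ c := by
  rcases le_total b a with h1 | h1
  · rw [sup_eq_left.mpr h1] at h
    exact ENNReal.div_le_of_le_mul h

  · rw [sup_eq_right.mpr h1] at h
    have hb0 : b = 0 := by
      by_contra hb0
      have : c * b < 1 * b := (ENNReal.mul_lt_mul_iff_left hb0 hb).mpr hc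
      rw [one_mul] at this
      exact absurd h (not_le.mpr this)
    simp [hb0]

end DLAux
lemma ae_Ssup_ne_zero {Θ : Type*} [Countable Θ] [MeasurableSpace Θ]
    [DiscreteMeasurableSpace Θ]
    {X : ℕ → Type*} [∀ n, Countable (X n)] [∀ n, MeasurableSpace (X n)]
    (μ : Measure (Θ × (∀ i, X i))) [IsProbabilityMeasure μ] :
    ∀ᵐ ω ∂μ, ∀ n : ℕ,
      (⨆ θ' : Θ, (μ[|Prod.fst ⁻¹' {θ'}]) {ω' | ∀ i < n, ω'.2 i = ω.2 i}) ≠ 0 := by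
  rw [ae_all_iff]
  intro n
  set C : (∀ i : Fin n, X i) → Set (Θ × (∀ i, X i)) :=
    fun p => {ω' | ∀ i : Fin n, ω'.2 i = p i} with hCdef
  have hsub : {ω : Θ × (∀ i, X i) |
      ¬ (⨆ θ' : Θ, (μ[|Prod.fst ⁻¹' {θ'}]) {ω' | ∀ i < n, ω'.2 i = ω.2 i}) ≠ 0}
      ⊆ ⋃ (p : ∀ i : Fin n, X i) (_ : μ (C p) = 0), C p := by
    intro ω hω
    rw [mem_setOf_eq, not_not] at hω
    have hcyleq : C (fun i => ω.2 i) = {ω' | ∀ i < n, ω'.2 i = ω.2 i} := by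
      ext ω'
      exact ⟨fun h i hi => h ⟨i, hi⟩, fun h i => h i i.2⟩
    have hnull : μ {ω' | ∀ i < n, ω'.2 i = ω.2 i} = 0 := by
      have h1 : ∀ θ' : Θ,
          μ (Prod.fst ⁻¹' {θ'} ∩ {ω' | ∀ i < n, ω'.2 i = ω.2 i}) = 0 := by
        intro θ'
        have h2 : (μ[|Prod.fst ⁻¹' {θ'}]) {ω' | ∀ i < n, ω'.2 i = ω.2 i} = 0 :=
          le_antisymm (hω ▸ le_iSup
            (fun θ'' => (μ[|Prod.fst ⁻¹' {θ''}]) {ω' | ∀ i < n, ω'.2 i = ω.2 i}) θ')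
            zero_le
        rw [cond_apply ((MeasurableSet.singleton θ').preimage measurable_fst)] at h2
        rcases mul_eq_zero.mp h2 with h3 | h3
        · exact absurd h3 (ENNReal.inv_ne_zero.mpr (measure_ne_top μ _))
        · exact h3
      have huniv : (⋃ θ' : Θ, Prod.fst ⁻¹' {θ'} : Set (Θ × (∀ i, X i))) = univ := by
        ext ω''
        simp
      have hcov : {ω' : Θ × (∀ i, X i) | ∀ i < n, ω'.2 i = ω.2 i}
          = ⋃ θ' : Θ, Prod.fst ⁻¹' {θ'} ∩ {ω' : Θ × (∀ i, X i) | ∀ i < n, ω'.2 i = ω.2 i} := by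
        rw [← iUnion_inter, huniv, univ_inter]
      rw [hcov]
      exact measure_iUnion_null h1
    exact mem_iUnion₂.mpr ⟨fun i => ω.2 i, hcyleq ▸ hnull, fun i => rfl⟩
  rw [ae_iff]
  refine measure_mono_null hsub (measure_iUnion_null fun p => ?_)
  classical
  rw [iUnion_eq_if]
  by_cases hp : μ (C p) = 0
  · rwa [if_pos hp]
  · rw [if_neg hp]
    exact measure_empty

namespace DLAux

/-- The cylinder set determined by a prefix of observations. -/
def cylx {Θ : Type*} {X : ℕ → Type*} (x : ∀ i, X i) : ℕ → Set (Θ × (∀ i, X i)) :=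
  fun n => {ω' | ∀ i < n, ω'.2 i = x i}

noncomputable def condL {Θ : Type*} [MeasurableSpace Θ] {X : ℕ → Type*}
    [∀ n, MeasurableSpace (X n)] (μ : Measure (Θ × (∀ i, X i))) :
    Θ → Set (Θ × (∀ i, X i)) → ℝ≥0∞ :=
  fun θ' s => (μ[|Prod.fst ⁻¹' {θ'}]) s

noncomputable def estD {Θ : Type*} [Nonempty Θ] [MeasurableSpace Θ] {X : ℕ → Type*}
    [∀ n, MeasurableSpace (X n)] (μ : Measure (Θ × (∀ i, X i))) (U : Set Θ) :
    (n : ℕ) → (∀ i, X i) → Θ :=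
  fun n x => pick (condL μ) U n (tcount (condL μ) U (cylx x) n) (cylx x n)

lemma cylx_congr {Θ : Type*} {X : ℕ → Type*} {x y : ∀ i, X i} {n : ℕ}
    (h : ∀ i < n, x i = y i) : ∀ j ≤ n, cylx (Θ := Θ) x j = cylx y j := by
  intro j hj
  ext ω'
  refine forall₂_congr fun i hi => ?_
  rw [h i (lt_of_lt_of_le hi hj)]

lemma estD_congr {Θ : Type*} [Nonempty Θ] [MeasurableSpace Θ] {X : ℕ → Type*}
    [∀ n, MeasurableSpace (X n)] (μ : Measure (Θ × (∀ i, X i))) (U : Set Θ)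
    (n : ℕ) (x y : ∀ i, X i) (h : ∀ i < n, x i = y i) : estD μ U n x = estD μ U n y := by
  rw [estD, estD, tcount_congr (fun j hj => cylx_congr h j hj.le), cylx_congr h n le_rfl]

end DLAux

open DLAux

section Main

variable {Θ : Type*} [Countable Θ] [Nonempty Θ] [MeasurableSpace Θ] [DiscreteMeasurableSpace Θ]
    [TopologicalSpace Θ]
    {X : ℕ → Type*} [∀ n, Countable (X n)] [∀ n, MeasurableSpace (X n)]

/-- The constructed estimator is an approximate maximum likelihood estimator. -/
lemma estD_aml (μ : Measure (Θ × (∀ i, X i))) [IsProbabilityMeasure μ]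
    (hprior : ∀ θ : Θ, 0 < μ (Prod.fst ⁻¹' {θ})) (U : Set Θ) :
    ∀ᵐ ω ∂μ,
      liminf
        (fun n : ℕ =>
          (μ[|Prod.fst ⁻¹' {estD μ U n ω.2}]) (cylinder n ω) /
            ⨆ θ' : Θ, (μ[|Prod.fst ⁻¹' {θ'}]) (cylinder n ω))
        atTop = 1 := by
  have hprob : ∀ θ' : Θ, IsProbabilityMeasure (μ[|Prod.fst ⁻¹' {θ'}]) := fun θ' =>
    cond_isProbabilityMeasure_of_finite (hprior θ').ne' (measure_ne_top μ _)
  have hℓ1 : ∀ (s : Set (Θ × (∀ i, X i))) (θ' : Θ), condL μ θ' s ≤ 1 := fun s θ' => by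
    have := hprob θ'
    exact prob_le_one
  filter_upwards [ae_Ssup_ne_zero μ] with ω hω
  have hS0 : ∀ n : ℕ, Ssup (condL μ) (cylx ω.2 n) ≠ 0 := fun n => hω n
  have hS1 : ∀ n : ℕ, Ssup (condL μ) (cylx ω.2 n) ≠ ∞ := fun n =>
    ((iSup_le (hℓ1 _)).trans_lt ENNReal.one_lt_top).ne
  set idx : ℕ → ℕ := fun n =>
    if Trig (condL μ) U (tcount (condL μ) U (cylx ω.2) n) (cylx ω.2 n)
      then tcount (condL μ) U (cylx ω.2) n else n with hidxdef
  have hratio_le : ∀ n : ℕ,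
      (μ[|Prod.fst ⁻¹' {estD μ U n ω.2}]) (cylinder n ω) /
        (⨆ θ' : Θ, (μ[|Prod.fst ⁻¹' {θ'}]) (cylinder n ω)) ≤ 1 := fun n =>
    enn_div_le_one (le_iSup (fun θ' => (μ[|Prod.fst ⁻¹' {θ'}]) (cylinder n ω)) _)
  have hratio_ge : ∀ n : ℕ, cseq (idx n) ≤
      (μ[|Prod.fst ⁻¹' {estD μ U n ω.2}]) (cylinder n ω) /
        (⨆ θ' : Θ, (μ[|Prod.fst ⁻¹' {θ'}]) (cylinder n ω)) := by
    intro n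
    have hb := pick_bound (ℓ := condL μ) (U := U) (s := cylx ω.2 n) (hℓ1 _) n
      (tcount (condL μ) U (cylx ω.2) n)
    exact (ENNReal.le_div_iff_mul_le (Or.inl (hS0 n)) (Or.inl (hS1 n))).mpr hb
  have hidx : Tendsto idx atTop atTop := by
    by_cases hfreq : ∀ N, ∃ n ≥ N,
        Trig (condL μ) U (tcount (condL μ) U (cylx ω.2) n) (cylx ω.2 n)
    · refine tendsto_atTop_mono (fun n => ?_) (tcount_tendsto hfreq)
      rw [hidxdef]
      by_cases h : Trig (condL μ) U (tcount (condL μ) U (cylx ω.2) n) (cylx ω.2 n)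
      · simp [h]
      · simpa [h] using tcount_le (condL μ) U (cylx ω.2) n
    · push_neg at hfreq
      obtain ⟨N, hN⟩ := hfreq
      refine Tendsto.congr' ?_ tendsto_id
      rw [EventuallyEq, eventually_atTop]
      exact ⟨N, fun n hn => by simp [hidxdef, hN n hn]⟩
  refine le_antisymm (liminf_le_of_frequently_le' (Frequently.of_forall hratio_le)) ?_
  calc (1 : ℝ≥0∞) = liminf (fun n => cseq (idx n)) atTop :=
        (tendsto_cseq.comp hidx).liminf_eq.symm
    _ ≤ _ := liminf_le_liminf (Eventually.of_forall hratio_ge)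

lemma backward_aux (μ : Measure (Θ × (∀ i, X i))) [IsProbabilityMeasure μ]
    (hprior : ∀ θ : Θ, 0 < μ (Prod.fst ⁻¹' {θ}))
    (H : ∀ est : (n : ℕ) → (∀ i, X i) → Θ,
        (∀ n (x y : ∀ i, X i), (∀ i < n, x i = y i) → est n x = est n y) →
        (∀ᵐ ω ∂μ,
            liminf
              (fun n : ℕ =>
                (μ[|Prod.fst ⁻¹' {est n ω.2}]) (cylinder n ω) /
                  ⨆ θ' : Θ, (μ[|Prod.fst ⁻¹' {θ'}]) (cylinder n ω))
              atTop = 1) →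
        ∀ θ : Θ, ∀ᵐ ω ∂(μ[|Prod.fst ⁻¹' {θ}]),
            Tendsto (fun n : ℕ => est n ω.2) atTop (𝓝 θ)) :
    ∀ θ : Θ, ∀ U ∈ 𝓝 θ,
        ∀ᵐ ω ∂(μ[|Prod.fst ⁻¹' {θ}]),
          limsup
            (fun n : ℕ =>
              (⨆ θ' ∈ Uᶜ, (μ[|Prod.fst ⁻¹' {θ'}]) (cylinder n ω)) /
                ⨆ θtilde ∈ U, (μ[|Prod.fst ⁻¹' {θtilde}]) (cylinder n ω))
            atTop < 1 := by
  intro θ U hU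
  by_contra hcon
  have hprob : ∀ θ' : Θ, IsProbabilityMeasure (μ[|Prod.fst ⁻¹' {θ'}]) := fun θ' =>
    cond_isProbabilityMeasure_of_finite (hprior θ').ne' (measure_ne_top μ _)
  have hae := H (estD μ U) (estD_congr μ U) (estD_aml μ hprior U) θ
  rw [ae_iff] at hae hcon
  apply hcon
  refine measure_mono_null ?_ hae
  intro ω hω
  rw [mem_setOf_eq, not_lt] at hω
  rw [mem_setOf_eq]
  intro htd
  have hevU : ∀ᶠ n in atTop, estD μ U n ω.2 ∈ U := htd.eventually_mem hU
  have hevNT : ∀ᶠ n in atTop,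
      ¬ Trig (condL μ) U (tcount (condL μ) U (cylx ω.2) n) (cylx ω.2 n) :=
    hevU.mono fun n hn ht => (pick_trig ht n).1 hn
  obtain ⟨N, hN⟩ := eventually_atTop.mp hevNT
  have hconst : ∀ n, N ≤ n →
      tcount (condL μ) U (cylx ω.2) n = tcount (condL μ) U (cylx ω.2) N := by
    intro n hn
    induction n, hn using Nat.le_induction with
    | base => rfl
    | succ n hn ih => rw [tcount, if_neg (hN n hn), Nat.add_zero, ih]
  set M := tcount (condL μ) U (cylx ω.2) N with hM
  have hBA : ∀ n, N ≤ n →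
      (⨆ θ' ∈ Uᶜ, (μ[|Prod.fst ⁻¹' {θ'}]) (cylinder n ω)) /
        (⨆ θtilde ∈ U, (μ[|Prod.fst ⁻¹' {θtilde}]) (cylinder n ω)) ≤ cseq M := by
    intro n hn
    have hnt := hN n hn
    rw [hconst n hn] at hnt
    have hBle : (⨆ θ' ∈ Uᶜ, condL μ θ' (cylx ω.2 n)) ≤ cseq M * Ssup (condL μ) (cylx ω.2 n) :=
      iSup₂_le fun θ' h' => not_lt.1 fun hlt => hnt ⟨θ', h', hlt⟩
    rw [Ssup_eq_sup (condL μ) U (cylx ω.2 n)] at hBle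
    have hBtop : (⨆ θ' ∈ Uᶜ, condL μ θ' (cylx ω.2 n)) ≠ ∞ := by
      refine ((iSup₂_le fun θ' _ => ?_).trans_lt ENNReal.one_lt_top).ne
      have := hprob θ'
      exact prob_le_one
    exact enn_key (cseq_lt_one M) hBtop hBle
  have hlimsup_le :
      limsup
        (fun n : ℕ =>
          (⨆ θ' ∈ Uᶜ, (μ[|Prod.fst ⁻¹' {θ'}]) (cylinder n ω)) /
            ⨆ θtilde ∈ U, (μ[|Prod.fst ⁻¹' {θtilde}]) (cylinder n ω))
        atTop ≤ cseq M :=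
    limsup_le_of_le (by isBoundedDefault) (eventually_atTop.mpr ⟨N, hBA⟩)
  exact absurd (hω.trans hlimsup_le) (not_le.mpr (cseq_lt_one M))

end Main

section Fwd

variable {Θ : Type*} [Countable Θ] [Nonempty Θ] [MeasurableSpace Θ] [DiscreteMeasurableSpace Θ]
    [TopologicalSpace Θ] [T1Space Θ] [FirstCountableTopology Θ]
    {X : ℕ → Type*} [∀ n, Countable (X n)] [∀ n, MeasurableSpace (X n)]

lemma forward_aux (μ : Measure (Θ × (∀ i, X i))) [IsProbabilityMeasure μ]
    (hDL : ∀ θ : Θ, ∀ U ∈ 𝓝 θ,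
        ∀ᵐ ω ∂(μ[|Prod.fst ⁻¹' {θ}]),
          limsup
            (fun n : ℕ =>
              (⨆ θ' ∈ Uᶜ, (μ[|Prod.fst ⁻¹' {θ'}]) (cylinder n ω)) /
                ⨆ θtilde ∈ U, (μ[|Prod.fst ⁻¹' {θtilde}]) (cylinder n ω))
            atTop < 1)
    (est : (n : ℕ) → (∀ i, X i) → Θ)
    (hML : ∀ᵐ ω ∂μ,
        liminf
          (fun n : ℕ =>
            (μ[|Prod.fst ⁻¹' {est n ω.2}]) (cylinder n ω) /
              ⨆ θ' : Θ, (μ[|Prod.fst ⁻¹' {θ'}]) (cylinder n ω))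
          atTop = 1)
    (θ : Θ) :
    ∀ᵐ ω ∂(μ[|Prod.fst ⁻¹' {θ}]), Tendsto (fun n : ℕ => est n ω.2) atTop (𝓝 θ) := by
  obtain ⟨B, hB⟩ := (𝓝 θ).exists_antitone_basis
  have hML' : ∀ᵐ ω ∂(μ[|Prod.fst ⁻¹' {θ}]),
      liminf
        (fun n : ℕ =>
          (μ[|Prod.fst ⁻¹' {est n ω.2}]) (cylinder n ω) /
            ⨆ θ' : Θ, (μ[|Prod.fst ⁻¹' {θ'}]) (cylinder n ω))
        atTop = 1 :=
    Filter.Eventually.filter_mono cond_absolutelyContinuous.ae_le hML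
  have hDL' : ∀ᵐ ω ∂(μ[|Prod.fst ⁻¹' {θ}]), ∀ k : ℕ,
      limsup
        (fun n : ℕ =>
          (⨆ θ' ∈ (B k)ᶜ, (μ[|Prod.fst ⁻¹' {θ'}]) (cylinder n ω)) /
            ⨆ θtilde ∈ B k, (μ[|Prod.fst ⁻¹' {θtilde}]) (cylinder n ω))
        atTop < 1 := by
    rw [ae_all_iff]
    exact fun k => hDL θ (B k) (hB.toHasBasis.mem_of_mem trivial)
  filter_upwards [hML', hDL'] with ω hliminf hlimsupk
  rw [hB.toHasBasis.tendsto_right_iff]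
  intro k _
  by_contra hev
  have hfreq : ∃ᶠ n in atTop, est n ω.2 ∈ (B k)ᶜ := not_eventually.mp hev
  obtain ⟨r, hr1, hr2⟩ := exists_between (hlimsupk k)
  have hev2 := eventually_lt_of_limsup_lt hr1
  have hfr : ∃ᶠ n in atTop,
      (μ[|Prod.fst ⁻¹' {est n ω.2}]) (cylinder n ω) /
        (⨆ θ' : Θ, (μ[|Prod.fst ⁻¹' {θ'}]) (cylinder n ω)) ≤ r := by
    refine (hfreq.and_eventually hev2).mono fun n hn => ?_
    have h1 : (μ[|Prod.fst ⁻¹' {est n ω.2}]) (cylinder n ω) /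
        (⨆ θ' : Θ, (μ[|Prod.fst ⁻¹' {θ'}]) (cylinder n ω)) ≤
        (⨆ θ' ∈ (B k)ᶜ, (μ[|Prod.fst ⁻¹' {θ'}]) (cylinder n ω)) /
          (⨆ θ' : Θ, (μ[|Prod.fst ⁻¹' {θ'}]) (cylinder n ω)) :=
      ENNReal.div_le_div_right
        (le_biSup (fun θ' => (μ[|Prod.fst ⁻¹' {θ'}]) (cylinder n ω)) hn.1) _
    have h2 : (⨆ θ' ∈ (B k)ᶜ, (μ[|Prod.fst ⁻¹' {θ'}]) (cylinder n ω)) /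
        (⨆ θ' : Θ, (μ[|Prod.fst ⁻¹' {θ'}]) (cylinder n ω)) ≤
        (⨆ θ' ∈ (B k)ᶜ, (μ[|Prod.fst ⁻¹' {θ'}]) (cylinder n ω)) /
          (⨆ θtilde ∈ B k, (μ[|Prod.fst ⁻¹' {θtilde}]) (cylinder n ω)) :=
      ENNReal.div_le_div_left
        (iSup₂_le fun θt _ => le_iSup (fun θ' => (μ[|Prod.fst ⁻¹' {θ'}]) (cylinder n ω)) θt) _
    exact (h1.trans h2).trans hn.2.le
  exact absurd (hliminf.symm.trans_le (liminf_le_of_frequently_le' hfr)) (not_le.mpr hr2)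

end Fwd


/-- A discrete large-sample estimation problem has distinctive likelihoods iff every
approximate maximum likelihood estimator on it is strongly consistent. -/
theorem distinctive_likelihoods_iff_approximate_ml_strongly_consistent
    {Θ : Type*} [Countable Θ] [Nonempty Θ] [MeasurableSpace Θ] [DiscreteMeasurableSpace Θ]
    [TopologicalSpace Θ] [T1Space Θ] [FirstCountableTopology Θ]
    {X : ℕ → Type*} [∀ n, Countable (X n)] [∀ n, MeasurableSpace (X n)]
    [∀ n, DiscreteMeasurableSpace (X n)]
    (μ : Measure (Θ × (∀ i, X i))) [IsProbabilityMeasure μ]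
    (hprior : ∀ θ : Θ, 0 < μ (Prod.fst ⁻¹' {θ})) :
    -- distinctive likelihoods
    (∀ θ : Θ, ∀ U ∈ 𝓝 θ,
        ∀ᵐ ω ∂(μ[|Prod.fst ⁻¹' {θ}]),
          limsup
            (fun n : ℕ =>
              (⨆ θ' ∈ Uᶜ, (μ[|Prod.fst ⁻¹' {θ'}]) (cylinder n ω)) /
                ⨆ θtilde ∈ U, (μ[|Prod.fst ⁻¹' {θtilde}]) (cylinder n ω))
            atTop < 1)
      ↔
    -- every approximate maximum likelihood estimator is strongly consistent
    (∀ est : (n : ℕ) → (∀ i, X i) → Θ,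
        (∀ n (x y : ∀ i, X i), (∀ i < n, x i = y i) → est n x = est n y) →
        (∀ᵐ ω ∂μ,
            liminf
              (fun n : ℕ =>
                (μ[|Prod.fst ⁻¹' {est n ω.2}]) (cylinder n ω) /
                  ⨆ θ' : Θ, (μ[|Prod.fst ⁻¹' {θ'}]) (cylinder n ω))
              atTop = 1) →
        ∀ θ : Θ, ∀ᵐ ω ∂(μ[|Prod.fst ⁻¹' {θ}]),
            Tendsto (fun n : ℕ => est n ω.2) atTop (𝓝 θ)) := by
  constructor
  · intro hDL est _ hML θ
    exact forward_aux μ hDL est hML θ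
  · intro H
    exact backward_aux μ hprior H
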